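/- Let k be a σ-field and A a k-σ-algebra. Suppose χ ∈ (A ⊗[k] A)ˣ is a unit satisfying χ² = 1, τ(χ) = χ, and the cocycle condition ∂₂(χ) = ∂₁(χ) · ∂₃(χ). Then there exist a unit α ∈ Aˣ and elements a, b ∈ k such that χ = α⁻¹ ⊗ α, α² = algebraMap k A (a), and σ_A(α) = algebraMap k A (b) · α. (This is the surjectivity part of the computation of H¹_σ(A/k, G) for the σ-algebraic subgroup G of 𝔾ₘ given by G(R) = {g ∈ Rˣ | g² = 1, σ(g) = g}.) -/

import Mathlib

open TensorProduct

/-- `∂₁ : A ⊗[k] A → A ⊗[k] A ⊗[k] A`, `a ⊗ b ↦ 1 ⊗ a ⊗ b`. -/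
noncomputable def amitsurP1 (k A : Type*) [CommRing k] [CommRing A] [Algebra k A] :
    A ⊗[k] A →ₐ[k] A ⊗[k] (A ⊗[k] A) :=
  Algebra.TensorProduct.includeRight

/-- `∂₂ : A ⊗[k] A → A ⊗[k] A ⊗[k] A`, `a ⊗ b ↦ a ⊗ 1 ⊗ b`. -/
noncomputable def amitsurP2 (k A : Type*) [CommRing k] [CommRing A] [Algebra k A] :
    A ⊗[k] A →ₐ[k] A ⊗[k] (A ⊗[k] A) :=
  Algebra.TensorProduct.map (AlgHom.id k A) Algebra.TensorProduct.includeRight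

/-- `∂₃ : A ⊗[k] A → A ⊗[k] A ⊗[k] A`, `a ⊗ b ↦ a ⊗ b ⊗ 1`. -/
noncomputable def amitsurP3 (k A : Type*) [CommRing k] [CommRing A] [Algebra k A] :
    A ⊗[k] A →ₐ[k] A ⊗[k] (A ⊗[k] A) :=
  Algebra.TensorProduct.map (AlgHom.id k A) Algebra.TensorProduct.includeLeft

/-- Apply a functional to the right tensor factor: `a ⊗ b ↦ f b • a`. -/
noncomputable def amitsurFf {k A : Type*} [CommRing k] [CommRing A] [Algebra k A]
    (f : A →ₗ[k] k) : A ⊗[k] A →ₗ[k] A :=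
  (TensorProduct.rid k A).toLinearMap.comp (LinearMap.lTensor A f)

lemma amitsurFf_tmul {k A : Type*} [CommRing k] [CommRing A] [Algebra k A]
    (f : A →ₗ[k] k) (a b : A) : amitsurFf f (a ⊗ₜ[k] b) = f b • a := by
  simp [amitsurFf]

lemma amitsurI1 {k A : Type*} [CommRing k] [CommRing A] [Algebra k A]
    (f : A →ₗ[k] k) (u : A ⊗[k] A) :
    LinearMap.lTensor A (amitsurFf f) (amitsurP2 k A u) = (amitsurFf f u) ⊗ₜ[k] (1 : A) := by
  induction u using TensorProduct.induction_on with
  | zero => simp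
  | tmul a b =>
      simp [amitsurP2, amitsurFf_tmul, smul_tmul', tmul_smul]
  | add x y hx hy =>
      rw [map_add, map_add, hx, hy, map_add, add_tmul]

lemma amitsurI2 {k A : Type*} [CommRing k] [CommRing A] [Algebra k A]
    (f : A →ₗ[k] k) (u v : A ⊗[k] A) :
    LinearMap.lTensor A (amitsurFf f) (amitsurP1 k A u * amitsurP3 k A v) =
      v * ((1 : A) ⊗ₜ[k] amitsurFf f u) := by
  induction u using TensorProduct.induction_on with
  | zero => simp
  | tmul a b =>
      induction v using TensorProduct.induction_on with
      | zero => simp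
      | tmul c d =>
          simp only [amitsurP1, amitsurP3, Algebra.TensorProduct.includeRight_apply,
            Algebra.TensorProduct.map_tmul, AlgHom.coe_id, id_eq,
            Algebra.TensorProduct.includeLeft_apply, Algebra.TensorProduct.tmul_mul_tmul,
            one_mul, mul_one, LinearMap.lTensor_tmul, amitsurFf_tmul, tmul_smul]
          rw [mul_smul_comm, Algebra.TensorProduct.tmul_mul_tmul, mul_one, mul_comm d a]
      | add x y hx hy =>
          rw [map_add, mul_add, map_add, hx, hy, add_mul]
  | add x y hx hy =>
      rw [map_add, add_mul, map_add, hx, hy, map_add, tmul_add, mul_add]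

/-- Every 1-cocycle for the σ-algebraic subgroup `G ≤ 𝔾ₘ` with
`G(R) = {g ∈ Rˣ | g² = 1, σ(g) = g}` is of the form `α⁻¹ ⊗ α` with `α² ∈ k`
and `σ(α)/α ∈ k`. -/
theorem h1_sigma_mu2_surjective (k A : Type*) [Field k] [CommRing A] [Algebra k A]
    (σk : k →+* k) (σA : A →+* A)
    (hσ : ∀ c : k, σA (algebraMap k A c) = algebraMap k A (σk c))
    (τ : A ⊗[k] A →+* A ⊗[k] A)
    (hτ : ∀ a b : A, τ (a ⊗ₜ[k] b) = σA a ⊗ₜ[k] σA b)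
    (χ : (A ⊗[k] A)ˣ)
    (hχsq : χ ^ 2 = 1)
    (hχτ : τ χ.val = χ.val)
    (hcoc : amitsurP2 k A χ.val = amitsurP1 k A χ.val * amitsurP3 k A χ.val) :
    ∃ (α : Aˣ) (a b : k),
      χ.val = ((α⁻¹ : Aˣ) : A) ⊗ₜ[k] ((α : Aˣ) : A) ∧
      ((α : Aˣ) : A) ^ 2 = algebraMap k A a ∧
      σA ((α : Aˣ) : A) = algebraMap k A b * ((α : Aˣ) : A) := by
  classical
  rcases subsingleton_or_nontrivial A with hA | hA
  · have h0 : ∀ x : A ⊗[k] A, x = 0 := by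
      intro x
      induction x using TensorProduct.induction_on with
      | zero => rfl
      | tmul a b => rw [Subsingleton.elim a 0, zero_tmul]
      | add x y hx hy => rw [hx, hy, add_zero]
    exact ⟨1, 1, 1, (h0 _).trans (h0 _).symm, Subsingleton.elim _ _, Subsingleton.elim _ _⟩
  -- χ.val * χ.val = 1
  have hvalsq : χ.val * χ.val = 1 := by
    rw [← Units.val_mul, ← sq, hχsq, Units.val_one]
  -- key cocycle consequence
  have key1 : ∀ f : A →ₗ[k] k,
      (amitsurFf f χ.val) ⊗ₜ[k] (1 : A) = χ.val * ((1 : A) ⊗ₜ[k] amitsurFf f χ.val) := by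
    intro f
    have h := congrArg (LinearMap.lTensor A (amitsurFf f)) hcoc
    rwa [amitsurI1, amitsurI2] at h
  -- product of two "J" elements is symmetric
  have Jmul : ∀ x y : A, x ⊗ₜ[k] (1 : A) = χ.val * ((1 : A) ⊗ₜ[k] x) →
      y ⊗ₜ[k] (1 : A) = χ.val * ((1 : A) ⊗ₜ[k] y) →
      (x * y) ⊗ₜ[k] (1 : A) = (1 : A) ⊗ₜ[k] (x * y) := by
    intro x y hx hy
    have h1 : (x * y) ⊗ₜ[k] (1 : A) = (x ⊗ₜ[k] (1 : A)) * (y ⊗ₜ[k] (1 : A)) := by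
      rw [Algebra.TensorProduct.tmul_mul_tmul, mul_one]
    rw [h1, hx, hy]
    calc (χ.val * ((1:A) ⊗ₜ[k] x)) * (χ.val * ((1:A) ⊗ₜ[k] y))
        = (χ.val * χ.val) * (((1:A) ⊗ₜ[k] x) * ((1:A) ⊗ₜ[k] y)) := by ring
      _ = (1:A) ⊗ₜ[k] (x * y) := by
          rw [hvalsq, one_mul, Algebra.TensorProduct.tmul_mul_tmul, one_mul]
  -- a functional with h 1 = 1
  obtain ⟨h1f, hh1⟩ : ∃ h : A →ₗ[k] k, h 1 = 1 := by
    have hinj : LinearMap.ker (LinearMap.toSpanSingleton k A 1) = ⊥ := by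
      rw [LinearMap.ker_eq_bot']
      intro c hc
      rcases smul_eq_zero.mp hc with h | h
      · exact h
      · exact absurd h one_ne_zero
    obtain ⟨g, hg⟩ := (LinearMap.toSpanSingleton k A 1).exists_leftInverse_of_injective hinj
    refine ⟨g, ?_⟩
    have := congrArg (fun φ : k →ₗ[k] k => φ 1) hg
    simpa using this
  -- elements with x ⊗ 1 = 1 ⊗ x are scalars
  have toScalar : ∀ x : A, x ⊗ₜ[k] (1 : A) = (1 : A) ⊗ₜ[k] x →
      ∃ c : k, x = algebraMap k A c := by
    intro x hx
    have h := congrArg (amitsurFf h1f) hx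
    rw [amitsurFf_tmul, amitsurFf_tmul, hh1, one_smul] at h
    exact ⟨h1f x, by rw [Algebra.algebraMap_eq_smul_one]; exact h⟩
  -- find f, g with nonzero product
  have hex : ∃ f g : A →ₗ[k] k, amitsurFf f χ.val * amitsurFf g χ.val ≠ 0 := by
    by_contra hcon
    push_neg at hcon
    set b := Module.Basis.ofVectorSpace k A with hb
    set e : (A ⊗[k] A) ≃ₗ[k] (Module.Basis.ofVectorSpaceIndex k A →₀ A) :=
      (TensorProduct.congr (LinearEquiv.refl k A) b.repr).trans
        (TensorProduct.finsuppScalarRight k k A (Module.Basis.ofVectorSpaceIndex k A)) with he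
    have E1 : ∀ (t : A ⊗[k] A) i, e t i = amitsurFf (b.coord i) t := by
      intro t i
      induction t using TensorProduct.induction_on with
      | zero => simp
      | tmul a c => simp [he, amitsurFf_tmul, Module.Basis.coord_apply]
      | add x y hx hy => rw [map_add, Finsupp.add_apply, hx, hy, map_add]
    have Esingle : ∀ (i) (x : A), e.symm (Finsupp.single i x) = x ⊗ₜ[k] b i := by
      intro i x
      rw [LinearEquiv.symm_apply_eq]
      ext j
      rw [E1, amitsurFf_tmul, Module.Basis.coord_apply, Module.Basis.repr_self, Finsupp.single_apply,
        Finsupp.single_apply]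
      by_cases hij : i = j <;> simp [hij]
    have E2 : ∀ g : Module.Basis.ofVectorSpaceIndex k A →₀ A,
        e.symm g = g.sum fun i x => x ⊗ₜ[k] b i := by
      intro g
      induction g using Finsupp.induction with
      | zero => simp
      | single_add i x g hig hx ih =>
          rw [map_add, ih, Esingle,
            Finsupp.sum_add_index' (h := fun i (x : A) => x ⊗ₜ[k] b i)
              (fun j => zero_tmul _ _) (fun j x y => add_tmul _ _ _),
            Finsupp.sum_single_index (h := fun i (x : A) => x ⊗ₜ[k] b i) (zero_tmul _ _)]
    have hzero : χ.val * χ.val = 0 := by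
      conv_lhs => rw [← e.symm_apply_apply χ.val, E2 (e χ.val)]
      rw [Finsupp.sum_mul]
      refine Finset.sum_eq_zero fun i _ => ?_
      dsimp only
      rw [Finsupp.mul_sum]
      refine Finset.sum_eq_zero fun j _ => ?_
      dsimp only
      rw [Algebra.TensorProduct.tmul_mul_tmul, E1, E1, hcon, zero_tmul]
    rw [hvalsq] at hzero
    have := congrArg (Algebra.TensorProduct.lmul' k (S := A)) hzero
    rw [map_one, map_zero] at this
    exact one_ne_zero this
  obtain ⟨f, g, hfg⟩ := hex
  set p := amitsurFf f χ.val with hpdef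
  set q := amitsurFf g χ.val with hqdef
  have hp : p ⊗ₜ[k] (1 : A) = χ.val * ((1 : A) ⊗ₜ[k] p) := key1 f
  have hq : q ⊗ₜ[k] (1 : A) = χ.val * ((1 : A) ⊗ₜ[k] q) := key1 g
  obtain ⟨c, hc⟩ := toScalar (p * q) (Jmul p q hp hq)
  have hc0 : c ≠ 0 := by
    intro h
    exact hfg (by rw [hc, h, map_zero])
  -- p is a unit
  have hxvi : p * (algebraMap k A c⁻¹ * q) = 1 := by
    rw [← mul_assoc, mul_comm p, mul_assoc, hc, ← map_mul, inv_mul_cancel₀ hc0, map_one]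
  set x : Aˣ := ⟨p, algebraMap k A c⁻¹ * q, hxvi, by rw [mul_comm]; exact hxvi⟩ with hxdef
  set p' : A := algebraMap k A c⁻¹ * q with hp'def
  have hxval : (x : A) = p := rfl
  have hxinv : ((x⁻¹ : Aˣ) : A) = p' := rfl
  have hpp' : p * p' = 1 := hxvi
  -- χ = p ⊗ p'
  have hchi : χ.val = p ⊗ₜ[k] p' := by
    have h1 : χ.val * ((1:A) ⊗ₜ[k] p) * ((1:A) ⊗ₜ[k] p') = χ.val := by
      rw [mul_assoc, Algebra.TensorProduct.tmul_mul_tmul, one_mul, hpp',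
        ← Algebra.TensorProduct.one_def, mul_one]
    rw [← h1, ← hp, Algebra.TensorProduct.tmul_mul_tmul, one_mul, mul_one]
  -- α² ∈ k
  obtain ⟨a', ha'⟩ := toScalar (p * p) (Jmul p p hp hp)
  have ha'0 : a' ≠ 0 := by
    intro h
    rw [h, map_zero] at ha'
    have : (1 : A) = 0 := by
      calc (1 : A) = (p * p') * (p * p') := by rw [hpp', one_mul]
        _ = (p * p) * (p' * p') := by ring
        _ = 0 := by rw [ha', zero_mul]
    exact one_ne_zero this
  have hα2 : p' ^ 2 = algebraMap k A a'⁻¹ := by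
    have h1 : p' ^ 2 * algebraMap k A a' = 1 := by
      rw [← ha']
      calc p' ^ 2 * (p * p) = (p * p') * (p * p') := by ring
        _ = 1 := by rw [hpp', one_mul]
    calc p' ^ 2 = p' ^ 2 * (algebraMap k A a' * algebraMap k A a'⁻¹) := by
          rw [← map_mul, mul_inv_cancel₀ ha'0, map_one, mul_one]
      _ = algebraMap k A a'⁻¹ := by rw [← mul_assoc, h1, one_mul]
  -- σ part
  have hσpp' : σA p * σA p' = 1 := by rw [← map_mul, hpp', map_one]
  have hτχ : σA p ⊗ₜ[k] σA p' = p ⊗ₜ[k] p' := by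
    rw [← hτ, ← hchi, hχτ, hchi]
  have hu : (σA p * p') ⊗ₜ[k] (σA p' * p) = (1 : A) ⊗ₜ[k] (1 : A) := by
    have h := congrArg (fun z => z * (p' ⊗ₜ[k] p)) hτχ
    simp only [Algebra.TensorProduct.tmul_mul_tmul] at h
    rwa [hpp', mul_comm p' p, hpp'] at h
  have huv : (σA p * p') * (σA p' * p) = 1 := by
    calc (σA p * p') * (σA p' * p) = (σA p * σA p') * (p * p') := by ring
      _ = 1 := by rw [hσpp', hpp', one_mul]
  have hu2 : (σA p * p') ⊗ₜ[k] (1 : A) = (1 : A) ⊗ₜ[k] (σA p * p') := by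
    calc (σA p * p') ⊗ₜ[k] (1:A)
        = ((σA p * p') ⊗ₜ[k] (σA p' * p)) * ((1:A) ⊗ₜ[k] (σA p * p')) := by
          rw [Algebra.TensorProduct.tmul_mul_tmul, mul_one, mul_comm (σA p' * p), huv]
      _ = ((1:A) ⊗ₜ[k] (1:A)) * ((1:A) ⊗ₜ[k] (σA p * p')) := by rw [hu]
      _ = (1:A) ⊗ₜ[k] (σA p * p') := by
          rw [Algebra.TensorProduct.tmul_mul_tmul, one_mul, one_mul]
  obtain ⟨b0, hb0⟩ := toScalar _ hu2
  have hb00 : b0 ≠ 0 := by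
    intro h
    rw [h, map_zero] at hb0
    have : (1 : A) = 0 := by rw [← huv, hb0, zero_mul]
    exact one_ne_zero this
  have hσp' : σA p' = algebraMap k A b0⁻¹ * p' := by
    have h1 : σA p' * algebraMap k A b0 = p' := by
      rw [← hb0]
      calc σA p' * (σA p * p') = (σA p * σA p') * p' := by ring
        _ = p' := by rw [hσpp', one_mul]
    calc σA p' = σA p' * (algebraMap k A b0 * algebraMap k A b0⁻¹) := by
          rw [← map_mul, mul_inv_cancel₀ hb00, map_one, mul_one]
      _ = p' * algebraMap k A b0⁻¹ := by rw [← mul_assoc, h1]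
      _ = algebraMap k A b0⁻¹ * p' := mul_comm _ _
  refine ⟨x⁻¹, a'⁻¹, b0⁻¹, ?_, ?_, ?_⟩
  · rw [inv_inv, hxval, hxinv, hchi]
  · rw [hxinv, hα2]
  · rw [hxinv, hσp']
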